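/- Let G be a finitely generated group and let C be a class of finite groups (a property of groups invariant under isomorphism) that is closed under taking subgroups and extensions and contains at least one non-trivial group. Let K be the intersection of all normal subgroups N of G with G/N ∈ C. Let H be a normal subgroup of finite index in G with G/H ∈ C, and let H' be the kernel of the composite H → H_1(H) → H_1(H)/tors(H_1(H)), where H_1(H) = H^{ab} is the abelianization and tors denotes the torsion subgroup. Then K ⊆ H'; in particular, the first Betti numbers satisfy b_1(H/K) = b_1(H). -/

import Mathlib

open scoped TensorProduct

/-- The first Betti number of a group `G` with coefficients in a field `K`:
`b₁(G;K) = dim_K (G^{ab} ⊗_ℤ K)`. -/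
noncomputable def b1 (K : Type*) [Field K] (G : Type*) [Group G] : ℕ :=
  Module.finrank K (K ⊗[ℤ] (Additive (Abelianization G)))

lemma aux_baseChange_bijective {M N : Type} [AddCommGroup M] [AddCommGroup N]
    (f : M →ₗ[ℤ] N) (hf : Function.Surjective f)
    (hker : ∀ x ∈ LinearMap.ker f, ∃ n : ℤ, n ≠ 0 ∧ n • x = 0) :
    Function.Bijective (LinearMap.baseChange ℚ f) := by
  have hbc : ∀ z, (LinearMap.baseChange ℚ f) z = LinearMap.lTensor ℚ f z := fun z => by
    rw [← LinearMap.baseChange_eq_ltensor]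
  have hzero : ∀ w : ℚ ⊗[ℤ] (LinearMap.ker f),
      LinearMap.lTensor ℚ (LinearMap.ker f).subtype w = 0 := by
    intro w
    induction w with
    | zero => simp
    | tmul q m =>
      obtain ⟨n, hn, hnm⟩ := hker m m.2
      have hq : (n : ℤ) • ((n : ℚ)⁻¹ * q) = q := by
        rw [zsmul_eq_mul]
        field_simp
      have hm : (n : ℤ) • (m : M) = 0 := hnm
      calc LinearMap.lTensor ℚ (LinearMap.ker f).subtype (q ⊗ₜ[ℤ] m)
          = q ⊗ₜ[ℤ] (m : M) := by rw [LinearMap.lTensor_tmul]; rfl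
        _ = ((n : ℤ) • ((n : ℚ)⁻¹ * q)) ⊗ₜ[ℤ] (m : M) := by rw [hq]
        _ = ((n : ℚ)⁻¹ * q) ⊗ₜ[ℤ] ((n : ℤ) • (m : M)) := TensorProduct.smul_tmul _ _ _
        _ = 0 := by rw [hm, TensorProduct.tmul_zero]
    | add x y hx hy => simp [map_add, hx, hy]
  have hexact := lTensor_exact ℚ f.exact_subtype_ker_map hf
  constructor
  · intro x y hxy
    have h0 : LinearMap.lTensor ℚ f (x - y) = 0 := by
      rw [← hbc, map_sub, hxy, sub_self]
    obtain ⟨w, hw⟩ := (hexact (x - y)).mp h0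
    have := hzero w
    rw [hw] at this
    exact sub_eq_zero.mp this
  · intro z
    obtain ⟨w, hw⟩ := LinearMap.lTensor_surjective ℚ hf z
    exact ⟨w, by rw [hbc, hw]⟩

lemma aux_pow_smul_eq_zero {M : Type} [AddCommGroup M] [Module.Finite ℤ M]
    [NoZeroSMulDivisors ℤ M] {p : ℕ} (hp : 1 < p) (x : M)
    (h : ∀ k : ℕ, ∃ y, x = (p ^ k : ℤ) • y) : x = 0 := by
  have : Module.Free ℤ M := Module.free_of_finite_type_torsion_free'
  by_contra hx
  let b := Module.Free.chooseBasis ℤ M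
  obtain ⟨i, hi⟩ : ∃ i, b.repr x i ≠ 0 := by
    by_contra hall
    push_neg at hall
    exact hx (b.repr.map_eq_zero_iff.mp (Finsupp.ext hall))
  set c := b.repr x i with hc
  set k := c.natAbs + 1 with hk
  obtain ⟨y, hy⟩ := h k
  have hdvd : (p : ℤ) ^ k ∣ c := by
    rw [hc, hy, map_smul, Finsupp.smul_apply, smul_eq_mul]
    exact Dvd.intro _ rfl
  have hle : (p : ℤ) ^ k ≤ |c| := Int.le_of_dvd (abs_pos.mpr hi) ((dvd_abs _ _).mpr hdvd)
  have hlt : c.natAbs < p ^ k := by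
    calc c.natAbs < 2 ^ c.natAbs := Nat.lt_two_pow_self
    _ ≤ p ^ c.natAbs := Nat.pow_le_pow_left hp _
    _ < p ^ k := Nat.pow_lt_pow_right hp (by omega)
  rw [Int.abs_eq_natAbs] at hle
  have : (p : ℤ) ^ k < (p : ℤ) ^ k := lt_of_le_of_lt hle (by exact_mod_cast hlt)
  exact lt_irrefl _ this

/-- Let `G` be a finitely generated group and `C` an isomorphism-invariant class of finite
groups closed under subgroups and extensions containing a non-trivial group.  Let `K` be the
intersection of all normal subgroups `N` of `G` with `G/N ∈ C` (expressed via surjections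
with kernel `N` onto a group in `C`).  Let `H` be a finite index normal subgroup with
`G/H ∈ C` and let `H'` be the kernel of `H → H₁(H) → H₁(H)/tors(H₁(H))`.  Then `K ⊆ H'`;
in particular `b₁(H/K) = b₁(H)` (where `H/K` is expressed as any quotient of `H` by the
subgroup corresponding to `K`). -/
theorem stmt6 (G : Type) [Group G] [Group.FG G]
    (C : (H : Type) → [inst : Group H] → Prop)
    (hCfin : ∀ (H : Type) [Group H], C H → Finite H)
    (hCiso : ∀ (H₁ H₂ : Type) [Group H₁] [Group H₂], Nonempty (H₁ ≃* H₂) → C H₁ → C H₂)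
    (hCsub : ∀ (H : Type) [Group H] (S : Subgroup H), C H → C S)
    (hCext : ∀ (E Q : Type) [Group E] [Group Q] (φ : E →* Q),
      Function.Surjective φ → C (MonoidHom.ker φ) → C Q → C E)
    (hCnontriv : ∃ (H : Type) (_ : Group H), C H ∧ Nontrivial H)
    (K : Subgroup G)
    (hK : K = ⨅ (N : Subgroup G)
      (_ : ∃ (Q : Type) (_ : Group Q) (φ : G →* Q),
        Function.Surjective φ ∧ MonoidHom.ker φ = N ∧ C Q), N)
    (H : Subgroup G) (hHnorm : H.Normal) (hHfi : H.FiniteIndex)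
    (hHC : ∃ (Q : Type) (_ : Group Q) (φ : G →* Q),
      Function.Surjective φ ∧ MonoidHom.ker φ = H ∧ C Q)
    (H' : Subgroup H)
    (hH' : H' = Subgroup.comap (Abelianization.of : H →* Abelianization H)
      (CommGroup.torsion (Abelianization H))) :
    K ≤ Subgroup.map H.subtype H' ∧
    ∀ (Q : Type) [Group Q] (ψ : H →* Q), Function.Surjective ψ →
      MonoidHom.ker ψ = K.subgroupOf H → b1 ℚ Q = b1 ℚ H := by
  classical
  haveI := hHnorm
  haveI := hHfi
  obtain ⟨F, _, hCF, hFnt⟩ := hCnontriv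
  haveI hFfin := hCfin F hCF
  -- trivial groups are in C
  have Ctriv : ∀ (X : Type) [Group X], Subsingleton X → C X := by
    intro X _ hX
    haveI : Unique X := ⟨⟨1⟩, fun a => Subsingleton.elim a 1⟩
    exact hCiso (⊥ : Subgroup F) X ⟨MulEquiv.ofUnique⟩ (hCsub F ⊥ hCF)
  -- a prime p with a C-group of order p
  obtain ⟨x, hx⟩ := exists_ne (1 : F)
  have hordx : orderOf x ≠ 1 := fun h => hx (orderOf_eq_one_iff.mp h)
  set p := (orderOf x).minFac with hpdef
  have hp : p.Prime := Nat.minFac_prime hordx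
  haveI : Fact p.Prime := ⟨hp⟩
  have hdvd : p ∣ Nat.card F := (Nat.minFac_dvd _).trans (orderOf_dvd_natCard x)
  obtain ⟨g₀, hg₀⟩ := exists_prime_orderOf_dvd_card' p hdvd
  have Cp : ∀ (X : Type) [Group X], Nat.card X = p → C X := by
    intro X _ hX
    have hcardZ : Nat.card (Subgroup.zpowers g₀) = p := by
      rw [Nat.card_zpowers, hg₀]
    exact hCiso _ X ⟨mulEquivOfPrimeCardEq hcardZ hX⟩ (hCsub F _ hCF)
  -- finite commutative p-groups are in C
  have Cpgrp : ∀ (n : ℕ) (X : Type) [CommGroup X] [Finite X],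
      Nat.card X = n → IsPGroup p X → C X := by
    intro n
    induction n using Nat.strong_induction_on with
    | _ n ih =>
      intro X _ _ hcard hX
      rcases subsingleton_or_nontrivial X with hs | hnt
      · exact Ctriv X hs
      · obtain ⟨m, hm⟩ := IsPGroup.exists_card_eq hX
        have hm1 : m ≠ 0 := by
          rintro rfl
          rw [pow_zero] at hm
          obtain ⟨hsub, -⟩ := Nat.card_eq_one_iff_unique.mp hm
          exact not_subsingleton X hsub
        have hpdvd : p ∣ Nat.card X := hm ▸ dvd_pow_self p hm1
        obtain ⟨z, hz⟩ := exists_prime_orderOf_dvd_card' p hpdvd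
        set Z := Subgroup.zpowers z with hZ
        have hZcard : Nat.card Z = p := by rw [hZ, Nat.card_zpowers, hz]
        have hCZ : C Z := Cp _ hZcard
        have hmul : Nat.card Z * Nat.card (X ⧸ Z) = Nat.card X := by
          rw [show Nat.card (X ⧸ Z) = Z.index from rfl]
          exact Subgroup.card_mul_index Z
        have hqlt : Nat.card (X ⧸ Z) < n := by
          have hpos : 0 < Nat.card (X ⧸ Z) := Nat.card_pos
          have : Nat.card (X ⧸ Z) < p * Nat.card (X ⧸ Z) := by
            calc Nat.card (X ⧸ Z) = 1 * Nat.card (X ⧸ Z) := (one_mul _).symm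
            _ < p * Nat.card (X ⧸ Z) := (Nat.mul_lt_mul_right hpos).mpr hp.one_lt
          rw [hZcard] at hmul
          omega
        have hCQ : C (X ⧸ Z) := ih _ hqlt (X ⧸ Z) rfl (IsPGroup.to_quotient hX Z)
        refine hCext X (X ⧸ Z) (QuotientGroup.mk' Z) (QuotientGroup.mk'_surjective Z) ?_ hCQ
        rw [QuotientGroup.ker_mk']
        exact hCZ
  -- finite generation
  haveI : Group.FG H := inferInstance
  have hofsurjH : Function.Surjective (Abelianization.of : H →* Abelianization H) :=
    fun a => QuotientGroup.induction_on a fun z => ⟨z, rfl⟩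
  haveI : Group.FG (Abelianization H) := Group.fg_of_surjective hofsurjH
  haveI : Module.Finite ℤ (Additive (Abelianization H)) :=
    Module.Finite.iff_addGroup_fg.mpr inferInstance
  -- torsion translation
  have tors_of : ∀ a : Abelianization H, IsOfFinOrder a →
      Additive.ofMul a ∈ Submodule.torsion ℤ (Additive (Abelianization H)) := by
    intro a ha
    obtain ⟨n, hn, hpow⟩ := isOfFinOrder_iff_pow_eq_one.mp ha
    rw [Submodule.mem_torsion_iff]
    refine ⟨⟨(n : ℤ), mem_nonZeroDivisors_of_ne_zero (by exact_mod_cast hn.ne')⟩, ?_⟩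
    show (n : ℤ) • Additive.ofMul a = 0
    rw [natCast_zsmul, ← ofMul_pow, hpow]
    rfl
  have tors_to : ∀ a : Abelianization H,
      Additive.ofMul a ∈ Submodule.torsion ℤ (Additive (Abelianization H)) →
      IsOfFinOrder a := by
    intro a ha
    rw [Submodule.mem_torsion_iff] at ha
    obtain ⟨⟨n, hn⟩, hna⟩ := ha
    have hn0 : n ≠ 0 := nonZeroDivisors.ne_zero hn
    have hna' : n • Additive.ofMul a = 0 := hna
    have habs : (n.natAbs : ℤ) • Additive.ofMul a = 0 := by
      rcases Int.natAbs_eq n with h | h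
      · rw [← h]; exact hna'
      · rw [h, neg_smul] at hna'
        exact neg_eq_zero.mp hna'
    have hpow : a ^ n.natAbs = 1 := by
      have : Additive.ofMul (a ^ n.natAbs) = 0 := by
        rw [ofMul_pow, ← natCast_zsmul]
        exact habs
      have := congrArg Additive.toMul this
      simpa using this
    exact isOfFinOrder_iff_pow_eq_one.mpr ⟨n.natAbs, by omega, hpow⟩
  -- the subgroup chain
  set T : Subgroup (Abelianization H) := CommGroup.torsion (Abelianization H) with hT
  set Nk : ℕ → Subgroup (Abelianization H) :=
    fun k => T ⊔ (powMonoidHom (p ^ k) : Abelianization H →* Abelianization H).range with hNk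
  set Hk : ℕ → Subgroup H := fun k => Subgroup.comap Abelianization.of (Nk k) with hHk
  set Gk : ℕ → Subgroup G := fun k => (Hk k).map H.subtype with hGk
  have hpowmem : ∀ (k : ℕ) (a : Abelianization H), a ^ p ^ k ∈ Nk k := by
    intro k a
    exact Subgroup.mem_sup.mpr ⟨1, one_mem _, a ^ p ^ k, ⟨a, rfl⟩, one_mul _⟩
  have hGkN : ∀ k, (Gk k).Normal := by
    intro k
    constructor
    intro n hn g
    obtain ⟨h, hh, rfl⟩ := hn
    have hmem : (MulAut.conjNormal g h : H) ∈ Hk k := by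
      show Abelianization.of ((MulAut.conjNormal g).toMonoidHom h) ∈ Nk k
      rw [← Abelianization.map_of]
      obtain ⟨t, ht, z, hz, heq⟩ := Subgroup.mem_sup.mp (hh : Abelianization.of h ∈ Nk k)
      obtain ⟨b, rfl⟩ := hz
      rw [← heq, map_mul]
      refine Subgroup.mul_mem_sup (MonoidHom.isOfFinOrder _ ht) ?_
      refine ⟨Abelianization.map (MulAut.conjNormal g).toMonoidHom b, ?_⟩
      rw [powMonoidHom_apply, powMonoidHom_apply, map_pow]
    exact ⟨MulAut.conjNormal g h, hmem, MulAut.conjNormal_apply g h⟩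
  obtain ⟨Q₀, _, φ, hφs, hφk, hCQ₀⟩ := hHC
  have hCGk : ∀ k, C (G ⧸ Gk k) := by
    intro k
    haveI := hGkN k
    have hle : Gk k ≤ MonoidHom.ker φ := by rw [hφk]; exact Subgroup.map_subtype_le _
    have hliftsurj : Function.Surjective (QuotientGroup.lift (Gk k) φ hle) := by
      intro q
      obtain ⟨g', rfl⟩ := hφs q
      exact ⟨QuotientGroup.mk g', QuotientGroup.lift_mk' _ _ _⟩
    set ρ : H →* G ⧸ Gk k := (QuotientGroup.mk' (Gk k)).comp H.subtype with hρ
    have hkerρ : ρ.ker = Hk k := by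
      rw [hρ, ← MonoidHom.comap_ker, QuotientGroup.ker_mk']
      exact Subgroup.comap_map_eq_self_of_injective (Subgroup.subtype_injective H) _
    have hθker : ((QuotientGroup.mk' (Nk k)).comp
        (Abelianization.of : H →* Abelianization H)).ker = Hk k := by
      rw [← MonoidHom.comap_ker, QuotientGroup.ker_mk']
    have hθsurj : Function.Surjective ((QuotientGroup.mk' (Nk k)).comp
        (Abelianization.of : H →* Abelianization H)) :=
      (QuotientGroup.mk'_surjective _).comp hofsurjH
    have hpowone : ∀ a : (Abelianization H) ⧸ Nk k, a ^ p ^ k = 1 := by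
      intro a
      refine QuotientGroup.induction_on a ?_
      intro b
      have h1 : ((QuotientGroup.mk b : (Abelianization H) ⧸ Nk k)) ^ p ^ k
          = QuotientGroup.mk (b ^ p ^ k) := (map_pow (QuotientGroup.mk' (Nk k)) _ _).symm
      rw [h1]
      exact (QuotientGroup.eq_one_iff _).mpr (hpowmem k b)
    haveI : Group.FG ((Abelianization H) ⧸ Nk k) :=
      Group.fg_of_surjective (QuotientGroup.mk'_surjective (Nk k))
    haveI hfin : Finite ((Abelianization H) ⧸ Nk k) :=
      CommGroup.finite_of_fg_torsion _ fun a =>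
        isOfFinOrder_iff_pow_eq_one.mpr ⟨p ^ k, pow_pos hp.pos _, hpowone a⟩
    have hCA : C ((Abelianization H) ⧸ Nk k) := Cpgrp _ _ rfl (fun a => ⟨k, hpowone a⟩)
    have hkerlift : MonoidHom.ker (QuotientGroup.lift (Gk k) φ hle) = ρ.range := by
      ext y
      refine QuotientGroup.induction_on y ?_
      intro z
      rw [MonoidHom.mem_ker, QuotientGroup.lift_mk']
      constructor
      · intro hz
        have hzH : z ∈ H := by rw [← hφk]; exact hz
        exact ⟨⟨z, hzH⟩, rfl⟩
      · rintro ⟨w, hw⟩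
        have h1 : QuotientGroup.lift (Gk k) φ hle (QuotientGroup.mk (w : G))
            = QuotientGroup.lift (Gk k) φ hle (QuotientGroup.mk z) := by
          rw [show (QuotientGroup.mk (w : G) : G ⧸ Gk k) = ρ w from rfl, hw]
        rw [QuotientGroup.lift_mk', QuotientGroup.lift_mk'] at h1
        rw [← h1]
        show (w : G) ∈ MonoidHom.ker φ
        rw [hφk]
        exact w.2
    have e : ((Abelianization H) ⧸ Nk k) ≃* MonoidHom.ker (QuotientGroup.lift (Gk k) φ hle) :=
      (((QuotientGroup.quotientKerEquivOfSurjective _ hθsurj).symm).trans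
        (QuotientGroup.quotientMulEquivOfEq (hθker.trans hkerρ.symm))).trans
        ((QuotientGroup.quotientKerEquivRange ρ).trans (MulEquiv.subgroupCongr hkerlift.symm))
    exact hCext _ Q₀ _ hliftsurj (hCiso _ _ ⟨e⟩ hCA) hCQ₀
  have hKGk : ∀ k, K ≤ Gk k := by
    intro k
    haveI := hGkN k
    rw [hK]
    exact iInf₂_le (Gk k) ⟨G ⧸ Gk k, inferInstance, QuotientGroup.mk' (Gk k),
      QuotientGroup.mk'_surjective _, QuotientGroup.ker_mk' _, hCGk k⟩
  have part1 : K ≤ Subgroup.map H.subtype H' := by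
    intro g hg
    have hgH : g ∈ H := Subgroup.map_subtype_le _ (hKGk 0 hg)
    refine ⟨⟨g, hgH⟩, ?_, rfl⟩
    rw [hH']
    show Abelianization.of (⟨g, hgH⟩ : H) ∈ CommGroup.torsion (Abelianization H)
    have hmem : ∀ k, Abelianization.of (⟨g, hgH⟩ : H) ∈ Nk k := by
      intro k
      obtain ⟨h, hh, hhg⟩ := hKGk k hg
      have hhe : h = ⟨g, hgH⟩ := Subtype.ext hhg
      rw [← hhe]
      exact hh
    set π := (Submodule.torsion ℤ (Additive (Abelianization H))).mkQ with hπ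
    have hzero : π (Additive.ofMul (Abelianization.of (⟨g, hgH⟩ : H))) = 0 := by
      haveI : NoZeroSMulDivisors ℤ (Additive (Abelianization H) ⧸
          Submodule.torsion ℤ (Additive (Abelianization H))) :=
        noZeroSMulDivisors_iff_right_eq_zero_of_smul.mpr fun r hr m h => by simpa [hr] using h
      apply aux_pow_smul_eq_zero hp.one_lt
      intro k
      obtain ⟨t, ht, z, hz, heq⟩ := Subgroup.mem_sup.mp (hmem k)
      obtain ⟨b, rfl⟩ := hz
      refine ⟨π (Additive.ofMul b), ?_⟩
      have h1 : Additive.ofMul (t * (powMonoidHom (p ^ k) :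
            Abelianization H →* Abelianization H) b)
          = Additive.ofMul t + (p ^ k) • Additive.ofMul b := by
        simp [powMonoidHom_apply, ofMul_mul, ofMul_pow]
      have h2 : π (Additive.ofMul t) = 0 :=
        (Submodule.Quotient.mk_eq_zero _).mpr (tors_of t ht)
      rw [← heq, h1, map_add, map_nsmul, h2, zero_add, ← Nat.cast_pow, natCast_zsmul]
    have htors : Additive.ofMul (Abelianization.of (⟨g, hgH⟩ : H))
        ∈ Submodule.torsion ℤ (Additive (Abelianization H)) :=
      (Submodule.Quotient.mk_eq_zero _).mp hzero
    exact tors_to _ htors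
  refine ⟨part1, ?_⟩
  intro Q _ ψ hψs hψker
  have hKH' : K.subgroupOf H ≤ H' := by
    intro w hw
    have hw' : H.subtype w ∈ K := hw
    have h1 := part1 hw'
    rwa [Subgroup.mem_map_iff_mem (Subgroup.subtype_injective H)] at h1
  have hψstar : Function.Surjective (Abelianization.map ψ) := by
    intro y
    refine QuotientGroup.induction_on y ?_
    intro q
    obtain ⟨h, rfl⟩ := hψs q
    exact ⟨Abelianization.of h, Abelianization.map_of ψ h⟩
  have hkerstar : ∀ a : Abelianization H, Abelianization.map ψ a = 1 → IsOfFinOrder a := by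
    intro a ha
    obtain ⟨h, rfl⟩ := hofsurjH a
    rw [Abelianization.map_of] at ha
    have h1 : ψ h ∈ commutator Q := (QuotientGroup.eq_one_iff _).mp ha
    have h2 : commutator Q = Subgroup.map ψ (commutator H) := by
      rw [commutator_def, commutator_def, Subgroup.map_commutator,
        Subgroup.map_top_of_surjective ψ hψs]
    rw [h2] at h1
    obtain ⟨c, hc, hch⟩ := h1
    have hkermem : h * c⁻¹ ∈ MonoidHom.ker ψ := by
      simp [MonoidHom.mem_ker, hch]
    rw [hψker] at hkermem
    have hH'mem := hKH' hkermem
    rw [hH'] at hH'mem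
    have hofc : Abelianization.of c = 1 := (QuotientGroup.eq_one_iff _).mpr hc
    have hofh : Abelianization.of h = Abelianization.of (h * c⁻¹) := by
      rw [map_mul, map_inv, hofc, inv_one, mul_one]
    rw [hofh]
    exact hH'mem
  set fadd : Additive (Abelianization H) →+ Additive (Abelianization Q) :=
    AddMonoidHom.mk' (fun a => Additive.ofMul (Abelianization.map ψ a.toMul))
      (fun a b => by simp [toMul_add, map_mul, ofMul_mul]) with hfadd
  set f := fadd.toIntLinearMap with hf
  have hfs : Function.Surjective f := by
    intro y
    obtain ⟨a, ha⟩ := hψstar y.toMul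
    refine ⟨Additive.ofMul a, ?_⟩
    rw [show f (Additive.ofMul a) = Additive.ofMul (Abelianization.map ψ a) from rfl, ha]
    rfl
  have hfk : ∀ v ∈ LinearMap.ker f, ∃ n : ℤ, n ≠ 0 ∧ n • v = 0 := by
    intro v hv
    have h0 : Abelianization.map ψ v.toMul = 1 := by
      have hfv : f v = 0 := hv
      have := congrArg Additive.toMul hfv
      exact this
    obtain ⟨n, hn, hpow⟩ := isOfFinOrder_iff_pow_eq_one.mp (hkerstar _ h0)
    refine ⟨n, by exact_mod_cast hn.ne', ?_⟩
    have hsm : (n : ℤ) • v = Additive.ofMul (v.toMul ^ n) := by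
      rw [ofMul_pow, natCast_zsmul]
      rfl
    rw [hsm, hpow]
    rfl
  have hbij := aux_baseChange_bijective f hfs hfk
  have e := LinearEquiv.ofBijective (LinearMap.baseChange ℚ f) hbij
  show Module.finrank ℚ (ℚ ⊗[ℤ] Additive (Abelianization Q))
      = Module.finrank ℚ (ℚ ⊗[ℤ] Additive (Abelianization H))
  exact e.finrank_eq.symm
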